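/- arXiv:2504.01638 — 5 statements merged into one kernel-verified Lean document; each statement's English description precedes it below -/
import Mathlib

section
/- Let X ⊆ ℝ^n, U ⊆ ℝ^s a nonempty compact set, f : ℝ^n × ℝ^s → ℝ^n, h : ℝ^n → ℝ and γ ∈ (0,1). Suppose h(x) < 0 for every x ∈ ℝ^n \ X; for every x ∈ X the map u ↦ h(f(x,u)) is continuous on U; and for every x ∈ X, sup_{u ∈ U} h(f(x,u)) ≥ γ·h(x). Then S = {x ∈ X | h(x) ≥ 0} is a one-step controlled safety invariant set: for every x ∈ S there exists u ∈ U such that f(x,u) ∈ S. -/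
/-- A discrete-time control barrier function (with λ = 0) certifies that its
zero-superlevel set inside the safe set `X` is a one-step controlled safety
invariant set: from every state of the set some admissible control keeps the
next state in the set. -/
theorem one_step_CSIS_of_control_barrier {n s : ℕ}
    (X : Set (Fin n → ℝ)) (U : Set (Fin s → ℝ))
    (hU : U.Nonempty) (hUc : IsCompact U)
    (f : (Fin n → ℝ) → (Fin s → ℝ) → (Fin n → ℝ))
    (h : (Fin n → ℝ) → ℝ) (γ : ℝ) (hγ : γ ∈ Set.Ioo (0 : ℝ) 1)
    (hneg : ∀ x, x ∉ X → h x < 0)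
    (hcont : ∀ x ∈ X, ContinuousOn (fun u => h (f x u)) U)
    (hbar : ∀ x ∈ X, sSup ((fun u => h (f x u)) '' U) ≥ γ * h x) :
    ∀ x ∈ {x ∈ X | h x ≥ 0}, ∃ u ∈ U, f x u ∈ {x ∈ X | h x ≥ 0} := by
  rintro x ⟨hxX, hx0⟩
  have himg : IsCompact ((fun u => h (f x u)) '' U) :=
    hUc.image_of_continuousOn (hcont x hxX)
  have hne : ((fun u => h (f x u)) '' U).Nonempty := hU.image _
  have hmem := himg.sSup_mem hne
  obtain ⟨u, huU, hu⟩ := hmem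
  refine ⟨u, huU, ?_⟩
  have hge : h (f x u) ≥ γ * h x := by simp only at hu; rw [hu]; exact hbar x hxX
  have h0 : h (f x u) ≥ 0 :=
    le_trans (mul_nonneg hγ.1.le hx0) hge
  have hfX : f x u ∈ X := by
    by_contra hc
    exact absurd h0 (not_le.mpr (hneg _ hc))
  exact ⟨hfX, h0⟩
end

section
/- Let μ be a probability measure on ℝ^n, let X ⊆ ℝ^n be measurable, let f : ℝ^n → ℝ^n and h : ℝ^n → ℝ be such that h(x) < 0 for all x ∉ X and the sets S = {x ∈ X | h(x) ≥ 0} and E = {x ∈ X | h(f(x)) ≥ γ·h(x)} are measurable, where γ ∈ (0,1). Suppose μ(S) > 0 and μ({x ∈ X | h(f(x)) < γ·h(x)}) ≤ α for some α ≥ 0. Then μ({x | f(x) ∈ S} ∩ S)/μ(S) ≥ 1 − α/μ(S); that is, the conditional probability, given x ∈ S, that f(x) ∈ S is at least 1 − α/μ(S). -/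
open MeasureTheory

/-- Probabilistic one-step invariance (uncontrolled case, Proposition 3):
if the scenario-optimization violation bound
`μ {x ∈ X | h (f x) < γ h x} ≤ α` holds, then the conditional probability,
given `x ∈ S = {x ∈ X | h x ≥ 0}`, that `f x ∈ S` is at least `1 - α / μ S`. -/
theorem probabilistic_one_step_SIS {n : ℕ}
    (μ : Measure (Fin n → ℝ)) [IsProbabilityMeasure μ]
    (X : Set (Fin n → ℝ)) (hX : MeasurableSet X)
    (f : (Fin n → ℝ) → (Fin n → ℝ)) (h : (Fin n → ℝ) → ℝ)
    (γ : ℝ) (hγ : γ ∈ Set.Ioo (0 : ℝ) 1)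
    (hneg : ∀ x, x ∉ X → h x < 0)
    (hSmeas : MeasurableSet {x ∈ X | h x ≥ 0})
    (hEmeas : MeasurableSet {x ∈ X | h (f x) ≥ γ * h x})
    (hSpos : 0 < μ {x ∈ X | h x ≥ 0})
    (α : ENNReal)
    (hviol : μ {x ∈ X | h (f x) < γ * h x} ≤ α) :
    μ ({x | f x ∈ {x ∈ X | h x ≥ 0}} ∩ {x ∈ X | h x ≥ 0}) / μ {x ∈ X | h x ≥ 0}
      ≥ 1 - α / μ {x ∈ X | h x ≥ 0} := by
  set S : Set (Fin n → ℝ) := {x ∈ X | h x ≥ 0} with hS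
  set E : Set (Fin n → ℝ) := {x ∈ X | h (f x) ≥ γ * h x} with hE
  set T : Set (Fin n → ℝ) := {x | f x ∈ S} ∩ S with hT
  have hSne : μ S ≠ 0 := hSpos.ne'
  have hStop : μ S ≠ ⊤ := (measure_lt_top μ S).ne
  -- S ∩ E ⊆ T
  have hsub : S ∩ E ⊆ T := by
    rintro x ⟨⟨hxX, hxh⟩, ⟨-, hxE⟩⟩
    have hfh : 0 ≤ h (f x) := le_trans (mul_nonneg hγ.1.le hxh) hxE
    have hfX : f x ∈ X := by
      by_contra hc
      exact absurd hfh (not_le.mpr (hneg _ hc))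
    exact ⟨⟨hfX, hfh⟩, hxX, hxh⟩
  -- S \ E ⊆ violation set
  have hsub2 : S \ E ⊆ {x ∈ X | h (f x) < γ * h x} := by
    rintro x ⟨⟨hxX, hxh⟩, hxE⟩
    refine ⟨hxX, ?_⟩
    by_contra hc
    exact hxE ⟨hxX, not_lt.mp hc⟩
  have key : μ S ≤ μ T + α := by
    calc μ S ≤ μ (S ∩ E) + μ (S \ E) := measure_le_inter_add_diff μ S E
    _ ≤ μ T + α := add_le_add (measure_mono hsub) (le_trans (measure_mono hsub2) hviol)
  rw [ge_iff_le, tsub_le_iff_right, ENNReal.div_add_div_same,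
    ENNReal.le_div_iff_mul_le (Or.inl hSne) (Or.inl hStop), one_mul]
  exact key
end

section
/- Let μ be a probability measure on ℝ^n, X ⊆ ℝ^n measurable, f : ℝ^n × ℝ^s → ℝ^n, h : ℝ^n → ℝ with h(x) < 0 for all x ∉ X, γ ∈ (0,1), controls u_1,…,u_M ∈ U ⊆ ℝ^s, and weight functions w_j : ℝ^n → ℝ with w_j(x) ≥ 0 and Σ_{j=1}^M w_j(x) = 1 for all x ∈ X. Assume the sets S = {x ∈ X | h(x) ≥ 0} and {x ∈ X | Σ_j w_j(x)·h(f(x,u_j)) < γ·h(x)} and {x ∈ S | ∃ j, f(x,u_j) ∈ S} are measurable, μ(S) > 0, and μ({x ∈ X | Σ_j w_j(x)·h(f(x,u_j)) < γ·h(x)}) ≤ α for some α ≥ 0. Then μ({x | ∃ u ∈ U, f(x,u) ∈ S} ∩ S)/μ(S) ≥ 1 − α/μ(S); in particular, the conditional probability, given x ∈ S, that some control u ∈ U keeps the next state f(x,u) in S is at least 1 − α/μ(S). -/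
open MeasureTheory

/-- Probabilistic one-step controlled invariance (Theorem 1): if the
scenario-optimization violation bound for the weighted-average relaxation
`μ {x ∈ X | Σ_j w_j(x) h(f(x,u_j)) < γ h x} ≤ α` holds, then the conditional
probability, given `x ∈ S = {x ∈ X | h x ≥ 0}`, that some control `u ∈ U`
keeps the next state `f x u` in `S` is at least `1 - α / μ S`. -/
theorem probabilistic_one_step_CSIS {n s : ℕ}
    (μ : Measure (Fin n → ℝ)) [IsProbabilityMeasure μ]
    (X : Set (Fin n → ℝ)) (hX : MeasurableSet X)
    (f : (Fin n → ℝ) → (Fin s → ℝ) → (Fin n → ℝ)) (h : (Fin n → ℝ) → ℝ)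
    (γ : ℝ) (hγ : γ ∈ Set.Ioo (0 : ℝ) 1)
    (hneg : ∀ x, x ∉ X → h x < 0)
    (U : Set (Fin s → ℝ)) (M : ℕ) (hM : 1 ≤ M)
    (u : Fin M → (Fin s → ℝ)) (hu : ∀ j, u j ∈ U)
    (w : Fin M → (Fin n → ℝ) → ℝ)
    (hw : ∀ j, ∀ x ∈ X, 0 ≤ w j x)
    (hw1 : ∀ x ∈ X, ∑ j, w j x = 1)
    (hSmeas : MeasurableSet {x ∈ X | h x ≥ 0})
    (hVmeas : MeasurableSet {x ∈ X | ∑ j, w j x * h (f x (u j)) < γ * h x})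
    (hGmeas : MeasurableSet {x ∈ {x ∈ X | h x ≥ 0} | ∃ j, f x (u j) ∈ {x ∈ X | h x ≥ 0}})
    (hSpos : 0 < μ {x ∈ X | h x ≥ 0})
    (α : ENNReal)
    (hviol : μ {x ∈ X | ∑ j, w j x * h (f x (u j)) < γ * h x} ≤ α) :
    μ ({x | ∃ u' ∈ U, f x u' ∈ {x ∈ X | h x ≥ 0}} ∩ {x ∈ X | h x ≥ 0})
        / μ {x ∈ X | h x ≥ 0}
      ≥ 1 - α / μ {x ∈ X | h x ≥ 0} := by
  set S : Set (Fin n → ℝ) := {x ∈ X | h x ≥ 0} with hS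
  set V : Set (Fin n → ℝ) := {x ∈ X | ∑ j, w j x * h (f x (u j)) < γ * h x} with hV
  set A : Set (Fin n → ℝ) := {x | ∃ u' ∈ U, f x u' ∈ S} ∩ S with hA
  -- Key inclusion: S \ V ⊆ A
  have hsub : S \ V ⊆ A := by
    rintro x ⟨⟨hxX, hxh⟩, hxV⟩
    have hge : γ * h x ≤ ∑ j, w j x * h (f x (u j)) := by
      by_contra hc
      exact hxV ⟨hxX, lt_of_not_ge hc⟩
    have hγh : 0 ≤ γ * h x := mul_nonneg hγ.1.le hxh
    -- find j with h (f x (u j)) ≥ 0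
    have hj : ∃ j, 0 ≤ h (f x (u j)) := by
      by_contra hall
      push_neg at hall
      have hlt : ∑ j, w j x * h (f x (u j)) < 0 := by
        obtain ⟨j0, hj0⟩ : ∃ j0, 0 < w j0 x := by
          by_contra hnone
          push_neg at hnone
          have : ∑ j, w j x = 0 :=
            Finset.sum_eq_zero fun j _ => le_antisymm (hnone j) (hw j x hxX)
          rw [hw1 x hxX] at this
          norm_num at this
        have h1 : ∀ j ∈ Finset.univ, w j x * h (f x (u j)) ≤ 0 :=
          fun j _ => mul_nonpos_of_nonneg_of_nonpos (hw j x hxX) (hall j).le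
        have h2 : w j0 x * h (f x (u j0)) < 0 :=
          mul_neg_of_pos_of_neg hj0 (hall j0)
        calc ∑ j, w j x * h (f x (u j)) < ∑ _j : Fin M, (0:ℝ) :=
              Finset.sum_lt_sum h1 ⟨j0, Finset.mem_univ j0, h2⟩
          _ = 0 := by simp
      exact absurd (le_trans hγh hge) (not_le.mpr hlt)
    obtain ⟨j, hjh⟩ := hj
    have hfX : f x (u j) ∈ X := by
      by_contra hfx
      exact absurd hjh (not_le.mpr (hneg _ hfx))
    exact ⟨⟨u j, hu j, hfX, hjh⟩, hxX, hxh⟩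
  -- measure inequality
  have hmA : μ S - α ≤ μ A := by
    have h1 : μ S ≤ μ (S \ V) + μ V :=
      (measure_mono (by intro x hx; by_cases hxV : x ∈ V
                        · exact Or.inr hxV
                        · exact Or.inl ⟨hx, hxV⟩)).trans (measure_union_le _ _)
    have : μ S - μ V ≤ μ (S \ V) := tsub_le_iff_right.mpr h1
    exact le_trans (tsub_le_tsub_left hviol _) (this.trans (measure_mono hsub))
  have hSne : μ S ≠ 0 := hSpos.ne'
  have hStop : μ S ≠ ⊤ := (measure_lt_top μ S).ne
  have key : (μ S - α) / μ S ≤ μ A / μ S :=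
    ENNReal.div_le_div_right hmA _
  calc (1 : ENNReal) - α / μ S = μ S / μ S - α / μ S := by
        rw [ENNReal.div_self hSne hStop]
    _ = (μ S - α) / μ S := (ENNReal.sub_div (fun _ _ => hSne)).symm
    _ ≤ μ A / μ S := key
end

section
/- Let h : ℝ^m × ℝ^n → ℝ, M ≥ 1, ε ∈ (0,1], γ ∈ (0,1), ε₀ > 0, λ̄ > 0, bounds U_1,…,U_m > 0, a point x₀ ∈ ℝ^n, sample states x_1,…,x_N ∈ ℝ^n, and observed successors y_{i,j} ∈ ℝ^n for i = 1,…,N, j = 1,…,M. Suppose (a₀, λ₀) satisfies the uniform-weight constraints: h(a₀,x₀) ≥ ε₀; (1/M)·Σ_{j=1}^M h(a₀, y_{i,j}) ≥ γ·h(a₀, x_i) − λ₀ for all i; λ₀ ∈ [0, λ̄]; and (a₀)_l ∈ [−U_l, U_l] for all l. For each i let j_i be an index maximizing j ↦ h(a₀, y_{i,j}), and define ε-greedy weights w_{i,j} = ε/M + (1−ε if j = j_i, else 0). Then (a₀, λ₀) also satisfies the ε-greedy-weight constraints (with Σ_j w_{i,j}·h(a, y_{i,j}) ≥ γ·h(a,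 x_i) − λ in place of the uniform average), and consequently the infimum λ₁* of λ over all (a, λ) satisfying the ε-greedy-weight constraints obeys λ₁* ≤ λ₀. -/
/-- Proposition 4 (xi_de), first step: a solution `(a₀, λ₀)` of the
uniform-weight program (N_N_u0) remains feasible for the ε-greedy-weight
program (N_N_u2) whose distinguished indices maximize `j ↦ h a₀ (y i j)`, and
hence the optimal value of the ε-greedy program is at most `λ₀`. -/
theorem eps_greedy_LP_value_le {n m N M : ℕ} (hM : 1 ≤ M)
    (h : (Fin m → ℝ) → (Fin n → ℝ) → ℝ)
    (ε : ℝ) (hε : ε ∈ Set.Ioc (0 : ℝ) 1) (γ : ℝ) (hγ : γ ∈ Set.Ioo (0 : ℝ) 1)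
    (ε₀ : ℝ) (hε₀ : 0 < ε₀) (lamBar : ℝ) (hlamBar : 0 < lamBar)
    (U : Fin m → ℝ) (hU : ∀ l, 0 < U l)
    (x₀ : Fin n → ℝ) (x : Fin N → (Fin n → ℝ)) (y : Fin N → Fin M → (Fin n → ℝ))
    (a₀ : Fin m → ℝ) (lam₀ : ℝ)
    (h0 : h a₀ x₀ ≥ ε₀)
    (huni : ∀ i, (1 / M) * ∑ j, h a₀ (y i j) ≥ γ * h a₀ (x i) - lam₀)
    (hlam₀ : lam₀ ∈ Set.Icc 0 lamBar)
    (ha₀ : ∀ l, a₀ l ∈ Set.Icc (-(U l)) (U l))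
    (jmax : Fin N → Fin M)
    (hjmax : ∀ i j, h a₀ (y i j) ≤ h a₀ (y i (jmax i))) :
    (h a₀ x₀ ≥ ε₀ ∧
      (∀ i, (1 - ε) * h a₀ (y i (jmax i)) + (ε / M) * ∑ j, h a₀ (y i j) ≥
        γ * h a₀ (x i) - lam₀) ∧
      lam₀ ∈ Set.Icc 0 lamBar ∧ (∀ l, a₀ l ∈ Set.Icc (-(U l)) (U l))) ∧
    sInf {lam : ℝ | ∃ a : Fin m → ℝ,
        h a x₀ ≥ ε₀ ∧
        (∀ i, (1 - ε) * h a (y i (jmax i)) + (ε / M) * ∑ j, h a (y i j) ≥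
          γ * h a (x i) - lam) ∧
        lam ∈ Set.Icc 0 lamBar ∧ (∀ l, a l ∈ Set.Icc (-(U l)) (U l))}
      ≤ lam₀ := by
  have hMpos : (0:ℝ) < M := by exact_mod_cast hM
  have key : ∀ i, (1 - ε) * h a₀ (y i (jmax i)) + (ε / M) * ∑ j, h a₀ (y i j) ≥
      γ * h a₀ (x i) - lam₀ := by
    intro i
    have havg : (1 / M) * ∑ j, h a₀ (y i j) ≤ h a₀ (y i (jmax i)) := by
      rw [div_mul_eq_mul_div, div_le_iff₀ hMpos, one_mul]
      calc ∑ j, h a₀ (y i j) ≤ ∑ _j : Fin M, h a₀ (y i (jmax i)) :=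
            Finset.sum_le_sum (fun j _ => hjmax i j)
        _ = h a₀ (y i (jmax i)) * M := by simp [mul_comm]
    have h1 : (1 - ε) * ((1 / M) * ∑ j, h a₀ (y i j)) ≤
        (1 - ε) * h a₀ (y i (jmax i)) :=
      mul_le_mul_of_nonneg_left havg (by linarith [hε.2])
    have h2 : (ε / M) * ∑ j, h a₀ (y i j) = ε * ((1 / M) * ∑ j, h a₀ (y i j)) := by
      ring
    have := huni i
    nlinarith [this]
  refine ⟨⟨h0, key, hlam₀, ha₀⟩, ?_⟩
  apply csInf_le
  · exact ⟨0, fun lam hlam => by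
      obtain ⟨a, _, _, hl, _⟩ := hlam
      exact hl.1⟩
  · exact ⟨a₀, h0, key, hlam₀, ha₀⟩
end

section
/- Let h : ℝ^m × ℝ^n → ℝ, M ≥ 1, ε ∈ (0,1], γ ∈ (0,1), ε₀ > 0, λ̄ > 0, bounds U_1,…,U_m > 0, x₀ ∈ ℝ^n, sample states x_1,…,x_N and successors y_{i,j} (i = 1,…,N, j = 1,…,M). Let j'_1,…,j'_N be arbitrary indices in {1,…,M} and suppose (a, λ) satisfies the ε-greedy constraints with distinguished indices j'_i: h(a,x₀) ≥ ε₀; (1−ε)·h(a, y_{i,j'_i}) + (ε/M)·Σ_{j=1}^M h(a, y_{i,j}) ≥ γ·h(a, x_i) − λ for all i; λ ∈ [0, λ̄]; a_l ∈ [−U_l, U_l]. For each i let j_i be an index maximizing j ↦ h(a, y_{i,j}). Then (a, λ) also satisfies the ε-greedy constraints with distinguished indices j_i, and hence the infimum of λ' over all (a', λ') satisfying the updated ε-greedy constraints is at most λ. -/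
/-- Monotonicity of the optimal value along the ε-greedy re-centering
iteration: if `(a, λ)` satisfies the ε-greedy constraints with arbitrary
distinguished indices `j'ᵢ`, then it also satisfies the ε-greedy constraints
whose distinguished indices `jᵢ` maximize `j ↦ h a (y i j)`, and hence the
optimal value of the updated program is at most `λ`. -/
theorem eps_greedy_recenter_value_le {n m N M : ℕ} (hM : 1 ≤ M)
    (h : (Fin m → ℝ) → (Fin n → ℝ) → ℝ)
    (ε : ℝ) (hε : ε ∈ Set.Ioc (0 : ℝ) 1) (γ : ℝ) (hγ : γ ∈ Set.Ioo (0 : ℝ) 1)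
    (ε₀ : ℝ) (hε₀ : 0 < ε₀) (lamBar : ℝ) (hlamBar : 0 < lamBar)
    (U : Fin m → ℝ) (hU : ∀ l, 0 < U l)
    (x₀ : Fin n → ℝ) (x : Fin N → (Fin n → ℝ)) (y : Fin N → Fin M → (Fin n → ℝ))
    (j' : Fin N → Fin M)
    (a : Fin m → ℝ) (lam : ℝ)
    (h0 : h a x₀ ≥ ε₀)
    (hfeas : ∀ i, (1 - ε) * h a (y i (j' i)) + (ε / M) * ∑ j, h a (y i j) ≥
      γ * h a (x i) - lam)
    (hlam : lam ∈ Set.Icc 0 lamBar)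
    (ha : ∀ l, a l ∈ Set.Icc (-(U l)) (U l))
    (jmax : Fin N → Fin M)
    (hjmax : ∀ i j, h a (y i j) ≤ h a (y i (jmax i))) :
    (h a x₀ ≥ ε₀ ∧
      (∀ i, (1 - ε) * h a (y i (jmax i)) + (ε / M) * ∑ j, h a (y i j) ≥
        γ * h a (x i) - lam) ∧
      lam ∈ Set.Icc 0 lamBar ∧ (∀ l, a l ∈ Set.Icc (-(U l)) (U l))) ∧
    sInf {lam' : ℝ | ∃ a' : Fin m → ℝ,
        h a' x₀ ≥ ε₀ ∧
        (∀ i, (1 - ε) * h a' (y i (jmax i)) + (ε / M) * ∑ j, h a' (y i j) ≥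
          γ * h a' (x i) - lam') ∧
        lam' ∈ Set.Icc 0 lamBar ∧ (∀ l, a' l ∈ Set.Icc (-(U l)) (U l))}
      ≤ lam := by
  have hfeas' : ∀ i, (1 - ε) * h a (y i (jmax i)) + (ε / M) * ∑ j, h a (y i j) ≥
      γ * h a (x i) - lam := by
    intro i
    have h1 : (1 - ε) * h a (y i (j' i)) ≤ (1 - ε) * h a (y i (jmax i)) :=
      mul_le_mul_of_nonneg_left (hjmax i (j' i)) (by linarith [hε.2])
    linarith [hfeas i]
  refine ⟨⟨h0, hfeas', hlam, ha⟩, ?_⟩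
  apply csInf_le
  · exact ⟨0, fun t ht => by obtain ⟨a', _, _, hl, _⟩ := ht; exact hl.1⟩
  · exact ⟨a, h0, hfeas', hlam, ha⟩
end
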